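/- Fix a noise system on Tame(Q≥0^r, Vect_K) and define d(F,G) = inf{ε : F and G are ε-close} (∞ if no such ε). Then d is an extended pseudometric on tame functors: d(F,F)=0, d is symmetric, and d satisfies the triangle inequality d(F,H) ≤ d(F,G)+d(G,H). -/

import Mathlib

open CategoryTheory CategoryTheory.Limits
open scoped NNReal ENNReal

set_option synthInstance.maxHeartbeats 1000000
set_option maxHeartbeats 1000000

attribute [local instance 2000] Preorder.smallCategory
attribute [local instance] CategoryTheory.Abelian.hasFiniteBiproducts

/-- The poset of `r`-tuples of non-negative rational numbers, with the componentwise order. -/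
abbrev Qr (r : ℕ) := Fin r → ℚ≥0

/-- The poset of `r`-tuples of natural numbers, with the componentwise order. -/
abbrev Nr (r : ℕ) := Fin r → ℕ

/-- `bfloor α v = join {w ∈ ℕ^r | α w ≤ v}`, computed componentwise as `⌊vᵢ/α⌋`. -/
def bfloor (α : ℚ≥0) {r : ℕ} (v : Qr r) : Nr r := fun i => Nat.floor ((v i : ℚ) / (α : ℚ))

/-- The embedding `α : ℕ^r → ℚ≥0^r`, `w ↦ α w`. -/
def embQ (α : ℚ≥0) {r : ℕ} (w : Nr r) : Qr r := fun i => α * (w i : ℚ≥0)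

theorem bfloor_mono (α : ℚ≥0) (r : ℕ) : Monotone (bfloor α (r := r)) := by
  intro v w h i
  exact Nat.floor_mono (by gcongr; exact_mod_cast h i)

theorem embQ_mono (α : ℚ≥0) (r : ℕ) : Monotone (embQ α (r := r)) := by
  intro v w h i
  dsimp [embQ]
  gcongr
  exact_mod_cast h i

/-- A functor `G : ℚ≥0^r ⥤ C` is `α`-tame if `G(α bα v ≤ v)` is an isomorphism for every `v`,
i.e. `G` is (isomorphic to) the left Kan extension along `α : ℕ^r → ℚ≥0^r` of its restriction;
equivalently, `G` is constant on the fundamental domains of `α`. -/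
def IsAlphaTame {C : Type*} [Category C] (α : ℚ≥0) {r : ℕ} (G : Qr r ⥤ C) : Prop :=
  ∀ (v : Qr r) (h : embQ α (bfloor α v) ≤ v), IsIso (G.map (homOfLE h))

/-- A functor is tame if it is `α`-tame for some positive rational `α`. -/
def IsTame {C : Type*} [Category C] {r : ℕ} (G : Qr r ⥤ C) : Prop :=
  ∃ α : ℚ≥0, 0 < α ∧ IsAlphaTame α G

/-- A noise system in `Tame(ℚ≥0^r, Vect_K)`. -/
structure NoiseSystem (K : Type) [Field K] (r : ℕ) where
  S : ℚ≥0 → Set (Qr r ⥤ ModuleCat K)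
  tame_mem : ∀ (ε : ℚ≥0) (F : Qr r ⥤ ModuleCat K), F ∈ S ε → IsTame F
  zero_mem : ∀ (ε : ℚ≥0) (F : Qr r ⥤ ModuleCat K), IsZero F → F ∈ S ε
  mono : ∀ τ ε : ℚ≥0, τ < ε → S τ ⊆ S ε
  ses_small : ∀ (F G H : Qr r ⥤ ModuleCat K) (f : F ⟶ G) (g : G ⟶ H) (w : f ≫ g = 0),
    (ShortComplex.mk f g w).ShortExact → IsTame F → IsTame H →
      ∀ ε : ℚ≥0, G ∈ S ε → F ∈ S ε ∧ H ∈ S ε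
  ses_add : ∀ (F G H : Qr r ⥤ ModuleCat K) (f : F ⟶ G) (g : G ⟶ H) (w : f ≫ g = 0),
    (ShortComplex.mk f g w).ShortExact → IsTame G →
      ∀ ε τ : ℚ≥0, F ∈ S ε → H ∈ S τ → G ∈ S (ε + τ)

/-- `φ` is an `ε`-equivalence: its kernel is `τ`-small and its cokernel is `μ`-small with
`τ + μ ≤ ε`. -/
noncomputable def IsEpsEquiv {K : Type} [Field K] {r : ℕ} (N : NoiseSystem K r) (ε : ℚ≥0)
    {F G : Qr r ⥤ ModuleCat K} (φ : F ⟶ G) : Prop :=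
  ∃ τ μ : ℚ≥0, τ + μ ≤ ε ∧ kernel φ ∈ N.S τ ∧ cokernel φ ∈ N.S μ

/-- `F` and `G` are `ε`-close: there is a common span `F ← H → G` by a `τ`- and a
`μ`-equivalence with `τ + μ ≤ ε`. -/
noncomputable def IsEpsClose {K : Type} [Field K] {r : ℕ} (N : NoiseSystem K r) (ε : ℚ≥0)
    (F G : Qr r ⥤ ModuleCat K) : Prop :=
  ∃ H : Qr r ⥤ ModuleCat K, IsTame H ∧
    ∃ (φ : H ⟶ F) (ψ : H ⟶ G) (τ μ : ℚ≥0),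
      τ + μ ≤ ε ∧ IsEpsEquiv N τ φ ∧ IsEpsEquiv N μ ψ

/-- The extended pseudometric associated with a noise system: the infimum of the `ε` such
that `F` and `G` are `ε`-close (`∞` if there is none). -/
noncomputable def noiseDist {K : Type} [Field K] {r : ℕ} (N : NoiseSystem K r)
    (F G : Qr r ⥤ ModuleCat K) : ℝ≥0∞ :=
  ⨅ (ε : ℚ≥0) (_ : IsEpsClose N ε F G), ((ε : ℝ≥0) : ℝ≥0∞)

noncomputable section AuxNoiseProof
open CategoryTheory CategoryTheory.Limits CategoryTheory.Abelian
open CategoryTheory.Abelian.Pseudoelement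
open scoped Pseudoelement

variable {K : Type} [Field K] {r : ℕ}

noncomputable instance : Abelian (Qr r ⥤ ModuleCat K) := inferInstance
instance : HasFiniteLimits (Qr r ⥤ ModuleCat K) := inferInstance
instance : HasFiniteColimits (Qr r ⥤ ModuleCat K) := inferInstance
instance : HasKernels (Qr r ⥤ ModuleCat K) := inferInstance
instance : HasCokernels (Qr r ⥤ ModuleCat K) := inferInstance
instance : HasPullbacks (Qr r ⥤ ModuleCat K) := inferInstance
instance : HasZeroObject (Qr r ⥤ ModuleCat K) := inferInstance

/-! ### Arithmetic lemmas about `bfloor` and `embQ` -/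

theorem embQ_bfloor_le {α : ℚ≥0} (hα : 0 < α) (v : Qr r) : embQ α (bfloor α v) ≤ v := by
  intro i
  dsimp [embQ, bfloor]
  rw [← NNRat.coe_le_coe]
  push_cast
  have h1 : ((⌊(v i : ℚ) / (α : ℚ)⌋₊ : ℕ) : ℚ) ≤ (v i : ℚ) / (α : ℚ) :=
    Nat.floor_le (by positivity)
  have hαq : (0:ℚ) < (α : ℚ) := by exact_mod_cast hα
  calc (α : ℚ) * ((⌊(v i : ℚ) / (α : ℚ)⌋₊ : ℕ) : ℚ) ≤ (α : ℚ) * ((v i : ℚ) / (α : ℚ)) := by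
        exact mul_le_mul_of_nonneg_left h1 (le_of_lt hαq)
    _ = (v i : ℚ) := by field_simp

theorem bfloor_embQ_self {α : ℚ≥0} (hα : 0 < α) (w : Nr r) : bfloor α (embQ α w) = w := by
  funext i
  dsimp [bfloor, embQ]
  have hαq : ((α : ℚ)) ≠ 0 := by exact_mod_cast hα.ne'
  push_cast
  rw [mul_comm, mul_div_assoc, div_self hαq, mul_one, Nat.floor_natCast]

theorem bfloor_embQ_between {α : ℚ≥0} (hα : 0 < α) {v u : Qr r}
    (h1 : embQ α (bfloor α v) ≤ u) (h2 : u ≤ v) : bfloor α u = bfloor α v := by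
  have hl := bfloor_mono α r h1
  have hr := bfloor_mono α r h2
  rw [bfloor_embQ_self hα] at hl
  funext i
  exact le_antisymm (hr i) (hl i)

theorem isIso_map_congr {C : Type*} [Category C] (F : Qr r ⥤ C) {a b c : Qr r} (hab : a = b)
    (h1 : a ≤ c) (h2 : b ≤ c) : IsIso (F.map (homOfLE h1)) ↔ IsIso (F.map (homOfLE h2)) := by
  subst hab; rfl

theorem isAlphaTame_of_mul {F : Qr r ⥤ ModuleCat K} {γ : ℚ≥0} (n : ℕ) (hγ : 0 < γ) (hn : 0 < n)
    (hF : IsAlphaTame ((n : ℚ≥0) * γ) F) : IsAlphaTame γ F := by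
  intro v h
  set α : ℚ≥0 := (n : ℚ≥0) * γ with hαdef
  have hnq : (0:ℚ≥0) < (n : ℚ≥0) := by exact_mod_cast hn
  have hαpos : 0 < α := mul_pos hnq hγ
  have key1 : embQ α (bfloor α v) ≤ embQ γ (bfloor γ v) := by
    intro i
    dsimp [embQ, bfloor]
    have hγq : ((γ : ℚ)) ≠ 0 := by exact_mod_cast hγ.ne'
    have hfl : ⌊(v i : ℚ) / (α : ℚ)⌋₊ = ⌊(v i : ℚ) / (γ : ℚ)⌋₊ / n := by
      rw [hαdef]
      push_cast
      rw [mul_comm (n:ℚ) (γ:ℚ), ← div_div]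
      exact Nat.floor_div_natCast _ n
    have hnat : n * (⌊(v i : ℚ) / (γ : ℚ)⌋₊ / n) ≤ ⌊(v i : ℚ) / (γ : ℚ)⌋₊ := Nat.mul_div_le _ n
    calc α * ((⌊(v i : ℚ) / (α : ℚ)⌋₊ : ℕ) : ℚ≥0)
        = γ * (((n * (⌊(v i : ℚ) / (γ : ℚ)⌋₊ / n) : ℕ) : ℚ≥0)) := by
          rw [hfl, hαdef]; push_cast; ring
      _ ≤ γ * ((⌊(v i : ℚ) / (γ : ℚ)⌋₊ : ℕ) : ℚ≥0) := by
          apply mul_le_mul_of_nonneg_left _ (zero_le : (0:ℚ≥0) ≤ γ)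
          exact_mod_cast hnat
  have h1 : embQ α (bfloor α v) ≤ v := le_trans key1 h
  have hfl2 : bfloor α (embQ γ (bfloor γ v)) = bfloor α v := bfloor_embQ_between hαpos key1 h
  have i1 : IsIso (F.map (homOfLE h1)) := hF v h1
  have h2 := embQ_bfloor_le hαpos (embQ γ (bfloor γ v))
  have i2 : IsIso (F.map (homOfLE key1)) :=
    (isIso_map_congr F (congrArg (embQ α) hfl2) h2 key1).mp (hF _ h2)
  have hcomp : F.map (homOfLE key1) ≫ F.map (homOfLE h) = F.map (homOfLE h1) := by
    rw [← F.map_comp]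
    congr 1
  rw [← hcomp] at i1
  exact @IsIso.of_isIso_comp_left _ _ _ _ _ (F.map (homOfLE key1)) (F.map (homOfLE h)) i2 i1

theorem exists_common_div (α β : ℚ≥0) (hα : 0 < α) (hβ : 0 < β) :
    ∃ γ : ℚ≥0, 0 < γ ∧ (∃ n : ℕ, 0 < n ∧ α = (n : ℚ≥0) * γ) ∧
      ∃ m : ℕ, 0 < m ∧ β = (m : ℚ≥0) * γ := by
  have hd1 : ((α.den : ℚ≥0)) ≠ 0 := by exact_mod_cast α.den_pos.ne'
  have hd2 : ((β.den : ℚ≥0)) ≠ 0 := by exact_mod_cast β.den_pos.ne'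
  have hdpos : 0 < ((α.den * β.den : ℕ) : ℚ≥0) := by
    exact_mod_cast Nat.mul_pos α.den_pos β.den_pos
  refine ⟨((α.den * β.den : ℕ) : ℚ≥0)⁻¹, inv_pos.2 hdpos, ⟨α.num * β.den, ?_, ?_⟩,
    ⟨β.num * α.den, ?_, ?_⟩⟩
  · exact Nat.mul_pos (NNRat.num_pos.2 hα) β.den_pos
  · have hα' : (α.num : ℚ≥0) = α * (α.den : ℚ≥0) := by
      have h := NNRat.num_div_den α
      rw [div_eq_iff hd1] at h
      exact h
    rw [eq_comm, mul_inv_eq_iff_eq_mul₀ hdpos.ne']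
    push_cast
    rw [← mul_assoc, ← hα']
  · exact Nat.mul_pos (NNRat.num_pos.2 hβ) α.den_pos
  · have hβ' : (β.num : ℚ≥0) = β * (β.den : ℚ≥0) := by
      have h := NNRat.num_div_den β
      rw [div_eq_iff hd2] at h
      exact h
    rw [eq_comm, mul_inv_eq_iff_eq_mul₀ hdpos.ne']
    push_cast
    rw [mul_comm ((α.den : ℚ≥0)) ((β.den : ℚ≥0)), ← mul_assoc, ← hβ']

theorem exists_common3 {F G H : Qr r ⥤ ModuleCat K} (hF : IsTame F) (hG : IsTame G)
    (hH : IsTame H) :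
    ∃ γ : ℚ≥0, 0 < γ ∧ IsAlphaTame γ F ∧ IsAlphaTame γ G ∧ IsAlphaTame γ H := by
  obtain ⟨α, hα, hFα⟩ := hF
  obtain ⟨β, hβ, hGβ⟩ := hG
  obtain ⟨δ, hδ, hHδ⟩ := hH
  obtain ⟨γ₁, hγ₁, ⟨n₁, hn₁, e₁⟩, ⟨m₁, hm₁, e₂⟩⟩ := exists_common_div α β hα hβ
  obtain ⟨γ, hγ, ⟨n₂, hn₂, e₃⟩, ⟨m₂, hm₂, e₄⟩⟩ := exists_common_div γ₁ δ hγ₁ hδ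
  refine ⟨γ, hγ, ?_, ?_, ?_⟩
  · have hE : α = ((n₁ * n₂ : ℕ) : ℚ≥0) * γ := by push_cast; rw [e₁, e₃]; ring
    exact isAlphaTame_of_mul (n₁ * n₂) hγ (Nat.mul_pos hn₁ hn₂) (hE ▸ hFα)
  · have hE : β = ((m₁ * n₂ : ℕ) : ℚ≥0) * γ := by push_cast; rw [e₂, e₃]; ring
    exact isAlphaTame_of_mul (m₁ * n₂) hγ (Nat.mul_pos hm₁ hn₂) (hE ▸ hGβ)
  · exact isAlphaTame_of_mul m₂ hγ hm₂ (e₄ ▸ hHδ)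

/-! ### Pointwise iso lemmas for (co)limits in the functor category -/

theorem isIso_limit_map {J : Type} [SmallCategory J]
    (D : J ⥤ (Qr r ⥤ ModuleCat K)) {v w : Qr r} (f : v ⟶ w)
    (h : ∀ j, IsIso ((D.obj j).map f)) : IsIso ((limit D).map f) := by
  have hα : IsIso (Functor.whiskerLeft D ((evaluation (Qr r) (ModuleCat K)).map f)) := by
    have : ∀ j, IsIso ((Functor.whiskerLeft D ((evaluation (Qr r) (ModuleCat K)).map f)).app j) :=
      fun j => h j
    exact NatIso.isIso_of_isIso_app _
  have h2 : IsIso (limMap (Functor.whiskerLeft D ((evaluation (Qr r) (ModuleCat K)).map f))) := by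
    change IsIso (lim.map _)
    infer_instance
  have heq := limit_map_limitObjIsoLimitCompEvaluation_hom D f
  have hre : (limit D).map f =
      ((limit D).map f ≫ (limitObjIsoLimitCompEvaluation D w).hom) ≫
        (limitObjIsoLimitCompEvaluation D w).inv := by
    rw [Category.assoc, Iso.hom_inv_id, Category.comp_id]
  rw [hre, heq]
  infer_instance

theorem isIso_colimit_map {J : Type} [SmallCategory J]
    (D : J ⥤ (Qr r ⥤ ModuleCat K)) {v w : Qr r} (f : v ⟶ w)
    (h : ∀ j, IsIso ((D.obj j).map f)) : IsIso ((colimit D).map f) := by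
  have hα : IsIso (Functor.whiskerLeft D ((evaluation (Qr r) (ModuleCat K)).map f)) := by
    have : ∀ j, IsIso ((Functor.whiskerLeft D ((evaluation (Qr r) (ModuleCat K)).map f)).app j) :=
      fun j => h j
    exact NatIso.isIso_of_isIso_app _
  have h2 : IsIso (colimMap (Functor.whiskerLeft D ((evaluation (Qr r) (ModuleCat K)).map f))) := by
    change IsIso (colim.map _)
    infer_instance
  have heq := colimit_map_colimitObjIsoColimitCompEvaluation_hom D f
  have hre : (colimit D).map f =
      ((colimit D).map f ≫ (colimitObjIsoColimitCompEvaluation D w).hom) ≫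
        (colimitObjIsoColimitCompEvaluation D w).inv := by
    rw [Category.assoc, Iso.hom_inv_id, Category.comp_id]
  rw [hre, heq]
  infer_instance

/-! ### Tameness closure properties -/

theorem isAlphaTame_kernel {F G : Qr r ⥤ ModuleCat K} (φ : F ⟶ G) {γ : ℚ≥0}
    (hF : IsAlphaTame γ F) (hG : IsAlphaTame γ G) : IsAlphaTame γ (kernel φ) := by
  intro v h
  show IsIso ((limit (parallelPair φ 0)).map (homOfLE h))
  refine isIso_limit_map _ _ ?_
  rintro (_ | _)
  · exact hF v h
  · exact hG v h

theorem isAlphaTame_cokernel {F G : Qr r ⥤ ModuleCat K} (φ : F ⟶ G) {γ : ℚ≥0}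
    (hF : IsAlphaTame γ F) (hG : IsAlphaTame γ G) : IsAlphaTame γ (cokernel φ) := by
  intro v h
  show IsIso ((colimit (parallelPair φ 0)).map (homOfLE h))
  refine isIso_colimit_map _ _ ?_
  rintro (_ | _)
  · exact hF v h
  · exact hG v h

theorem isAlphaTame_pullback {A B G : Qr r ⥤ ModuleCat K} (φ : A ⟶ G) (ψ : B ⟶ G) {γ : ℚ≥0}
    (hA : IsAlphaTame γ A) (hB : IsAlphaTame γ B) (hG : IsAlphaTame γ G) :
    IsAlphaTame γ (pullback φ ψ) := by
  intro v h
  show IsIso ((limit (cospan φ ψ)).map (homOfLE h))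
  refine isIso_limit_map _ _ ?_
  intro j
  rcases j with _ | j
  · exact hG v h
  · rcases j with _ | _
    · exact hA v h
    · exact hB v h

theorem isAlphaTame_of_iso {F G : Qr r ⥤ ModuleCat K} (e : F ≅ G) {γ : ℚ≥0}
    (hF : IsAlphaTame γ F) : IsAlphaTame γ G := by
  intro v h
  have heq : G.map (homOfLE h) = e.inv.app _ ≫ F.map (homOfLE h) ≫ e.hom.app _ := by
    rw [← Category.assoc, ← e.inv.naturality, Category.assoc, Iso.inv_hom_id_app,
      Category.comp_id]
  rw [heq]
  haveI := hF v h
  infer_instance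

theorem isTame_of_iso {F G : Qr r ⥤ ModuleCat K} (e : F ≅ G) (hF : IsTame F) : IsTame G := by
  obtain ⟨γ, hγ, hFγ⟩ := hF
  exact ⟨γ, hγ, isAlphaTame_of_iso e hFγ⟩

theorem isTame_of_isZero {F : Qr r ⥤ ModuleCat K} (h : IsZero F) : IsTame F := by
  refine ⟨1, one_pos, fun v hv => ?_⟩
  have h1 : IsZero (F.obj (embQ 1 (bfloor 1 v))) := (F.isZero_iff.1 h) _
  have h2 : IsZero (F.obj v) := (F.isZero_iff.1 h) _
  have : F.map (homOfLE hv) = (h1.iso h2).hom := h1.eq_of_src _ _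
  rw [this]
  infer_instance

/-! ### Short exact sequence helpers -/

theorem shortExact_cokernel {X Y : Qr r ⥤ ModuleCat K} (f : X ⟶ Y) [Mono f] :
    (ShortComplex.mk f (cokernel.π f) (cokernel.condition f)).ShortExact :=
  ShortComplex.ShortExact.mk'
    (ShortComplex.exact_of_g_is_cokernel _ (cokernelIsCokernel f)) ‹_› inferInstance

theorem shortExact_kernel {X Y : Qr r ⥤ ModuleCat K} (f : X ⟶ Y) [Epi f] :
    (ShortComplex.mk (kernel.ι f) f (kernel.condition f)).ShortExact :=
  ShortComplex.ShortExact.mk'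
    (ShortComplex.exact_of_f_is_kernel _ (kernelIsKernel f)) inferInstance ‹_›

theorem exact_ker {X Y : Qr r ⥤ ModuleCat K} (f : X ⟶ Y) :
    (ShortComplex.mk (kernel.ι f) f (kernel.condition f)).Exact :=
  ShortComplex.exact_of_f_is_kernel _ (kernelIsKernel f)

theorem exact_coker {X Y : Qr r ⥤ ModuleCat K} (f : X ⟶ Y) :
    (ShortComplex.mk f (cokernel.π f) (cokernel.condition f)).Exact :=
  ShortComplex.exact_of_g_is_cokernel _ (cokernelIsCokernel f)

/-! ### Noise system membership lemmas -/

theorem mem_of_iso (N : NoiseSystem K r) {X Y : Qr r ⥤ ModuleCat K} (e : X ≅ Y) {ε : ℚ≥0}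
    (hY : Y ∈ N.S ε) : X ∈ N.S ε := by
  have tY : IsTame Y := N.tame_mem ε Y hY
  have tX : IsTame X := isTame_of_iso e.symm tY
  have hz : IsZero (cokernel e.hom) := IsZero.of_iso (isZero_zero _) (cokernel.ofEpi e.hom)
  have hse : (ShortComplex.mk e.hom (cokernel.π e.hom) (cokernel.condition e.hom)).ShortExact := by
    refine ShortComplex.ShortExact.mk' ?_ ?_ ?_
    · exact ShortComplex.exact_of_g_is_cokernel _ (cokernelIsCokernel e.hom)
    · show Mono e.hom
      infer_instance
    · show Epi (cokernel.π e.hom)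
      infer_instance
  exact (N.ses_small X Y _ e.hom (cokernel.π e.hom) (cokernel.condition e.hom)
    hse tX (isTame_of_isZero hz) ε hY).1

/-! ### ε-equivalences compose additively -/

theorem isEpsEquiv_comp (N : NoiseSystem K r) {P A B : Qr r ⥤ ModuleCat K}
    (f : P ⟶ A) (g : A ⟶ B) (hP : IsTame P) (hA : IsTame A) (hB : IsTame B) {a b : ℚ≥0}
    (hf : IsEpsEquiv N a f) (hg : IsEpsEquiv N b g) : IsEpsEquiv N (a + b) (f ≫ g) := by
  obtain ⟨γ, hγ, tP, tA, tB⟩ := exists_common3 hP hA hB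
  obtain ⟨a₁, a₂, ha, hka, hca⟩ := hf
  obtain ⟨b₁, b₂, hb, hkb, hcb⟩ := hg
  have tkf : IsAlphaTame γ (kernel f) := isAlphaTame_kernel f tP tA
  have tkfg : IsAlphaTame γ (kernel (f ≫ g)) := isAlphaTame_kernel _ tP tB
  have tkg : IsAlphaTame γ (kernel g) := isAlphaTame_kernel g tA tB
  have tcf : IsAlphaTame γ (cokernel f) := isAlphaTame_cokernel f tP tA
  have tcfg : IsAlphaTame γ (cokernel (f ≫ g)) := isAlphaTame_cokernel _ tP tB
  have tcg : IsAlphaTame γ (cokernel g) := isAlphaTame_cokernel g tA tB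
  -- kernel part
  have hj0 : kernel.ι f ≫ (f ≫ g) = 0 := by
    rw [← Category.assoc, kernel.condition, zero_comp]
  set j : kernel f ⟶ kernel (f ≫ g) := kernel.lift (f ≫ g) (kernel.ι f) hj0 with hjdef
  have hjι : j ≫ kernel.ι (f ≫ g) = kernel.ι f := kernel.lift_ι _ _ _
  haveI mono_j : Mono j := by
    have : Mono (j ≫ kernel.ι (f ≫ g)) := by rw [hjι]; infer_instance
    exact mono_of_mono j (kernel.ι (f ≫ g))
  set u : kernel (f ≫ g) ⟶ kernel g :=
    kernel.lift g (kernel.ι (f ≫ g) ≫ f) (by rw [Category.assoc, kernel.condition]) with hudef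
  have huι : u ≫ kernel.ι g = kernel.ι (f ≫ g) ≫ f := kernel.lift_ι _ _ _
  have hju : j ≫ u = 0 := by
    rw [← cancel_mono (kernel.ι g), Category.assoc, huι, ← Category.assoc, hjι,
      kernel.condition, zero_comp]
  set m : cokernel j ⟶ kernel g := cokernel.desc j u hju with hmdef
  have hπm : cokernel.π j ≫ m = u := cokernel.π_desc _ _ _
  haveI mono_m : Mono m := by
    apply mono_of_zero_of_map_zero
    intro x hx
    obtain ⟨y, hy⟩ := pseudo_surjective_of_epi (cokernel.π j) x
    have huy : u y = 0 := by
      calc u y = (cokernel.π j ≫ m) y := by rw [hπm]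
        _ = m ((cokernel.π j) y) := Pseudoelement.comp_apply _ _ _
        _ = m x := by rw [hy]
        _ = 0 := hx
    have hfy : f ((kernel.ι (f ≫ g)) y) = 0 := by
      calc f ((kernel.ι (f ≫ g)) y) = (kernel.ι (f ≫ g) ≫ f) y := (Pseudoelement.comp_apply _ _ _).symm
        _ = (u ≫ kernel.ι g) y := by rw [huι]
        _ = (kernel.ι g) (u y) := Pseudoelement.comp_apply _ _ _
        _ = 0 := by rw [huy, Pseudoelement.apply_zero]
    obtain ⟨z, hz⟩ := pseudo_exact_of_exact (exact_ker f) _ hfy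
    have hjz : j z = y := by
      apply pseudo_injective_of_mono (kernel.ι (f ≫ g))
      calc (kernel.ι (f ≫ g)) (j z) = (j ≫ kernel.ι (f ≫ g)) z := (Pseudoelement.comp_apply _ _ _).symm
        _ = (kernel.ι f) z := by rw [hjι]
        _ = (kernel.ι (f ≫ g)) y := hz
    rw [← hy, ← hjz]
    calc (cokernel.π j) (j z) = (j ≫ cokernel.π j) z := (Pseudoelement.comp_apply _ _ _).symm
      _ = (0 : kernel f ⟶ cokernel j) z := by rw [cokernel.condition]
      _ = 0 := Pseudoelement.zero_apply _ _
  have hcj_tame : IsAlphaTame γ (cokernel j) := isAlphaTame_cokernel j tkf tkfg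
  have hcm_tame : IsAlphaTame γ (cokernel m) := isAlphaTame_cokernel m hcj_tame tkg
  have hcj_mem : cokernel j ∈ N.S b₁ :=
    (N.ses_small _ _ _ m (cokernel.π m) (cokernel.condition m) (shortExact_cokernel m)
      ⟨γ, hγ, hcj_tame⟩ ⟨γ, hγ, hcm_tame⟩ b₁ hkb).1
  have hkfg_mem : kernel (f ≫ g) ∈ N.S (a₁ + b₁) :=
    N.ses_add _ _ _ j (cokernel.π j) (cokernel.condition j) (shortExact_cokernel j)
      ⟨γ, hγ, tkfg⟩ a₁ b₁ hka hcj_mem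
  -- cokernel part
  set q : cokernel (f ≫ g) ⟶ cokernel g :=
    cokernel.desc (f ≫ g) (cokernel.π g) (by rw [Category.assoc, cokernel.condition, comp_zero]) with hqdef
  have hπq : cokernel.π (f ≫ g) ≫ q = cokernel.π g := cokernel.π_desc _ _ _
  haveI epi_q : Epi q := by
    have : Epi (cokernel.π (f ≫ g) ≫ q) := by rw [hπq]; infer_instance
    exact epi_of_epi (cokernel.π (f ≫ g)) q
  set w' : cokernel f ⟶ cokernel (f ≫ g) :=
    cokernel.desc f (g ≫ cokernel.π (f ≫ g))
      (by rw [← Category.assoc, cokernel.condition]) with hw'def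
  have hπw : cokernel.π f ≫ w' = g ≫ cokernel.π (f ≫ g) := cokernel.π_desc _ _ _
  have hwq : w' ≫ q = 0 := by
    rw [← cancel_epi (cokernel.π f), ← Category.assoc, hπw, Category.assoc, hπq,
      cokernel.condition, comp_zero]
  set e' : cokernel f ⟶ kernel q := kernel.lift q w' hwq with he'def
  have he'ι : e' ≫ kernel.ι q = w' := kernel.lift_ι _ _ _
  haveI epi_e' : Epi e' := by
    apply epi_of_pseudo_surjective
    intro x
    obtain ⟨c0, hc0⟩ := pseudo_surjective_of_epi (cokernel.π (f ≫ g)) ((kernel.ι q) x)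
    have hqc : (cokernel.π g) c0 = 0 := by
      calc (cokernel.π g) c0 = (cokernel.π (f ≫ g) ≫ q) c0 := by rw [hπq]
        _ = q ((cokernel.π (f ≫ g)) c0) := Pseudoelement.comp_apply _ _ _
        _ = q ((kernel.ι q) x) := by rw [hc0]
        _ = (kernel.ι q ≫ q) x := (Pseudoelement.comp_apply _ _ _).symm
        _ = (0 : kernel q ⟶ cokernel g) x := by rw [kernel.condition]
        _ = 0 := Pseudoelement.zero_apply _ _
    obtain ⟨a0, ha0⟩ := pseudo_exact_of_exact (exact_coker g) _ hqc
    refine ⟨(cokernel.π f) a0, ?_⟩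
    apply pseudo_injective_of_mono (kernel.ι q)
    calc (kernel.ι q) (e' ((cokernel.π f) a0)) = (e' ≫ kernel.ι q) ((cokernel.π f) a0) :=
        (Pseudoelement.comp_apply _ _ _).symm
      _ = w' ((cokernel.π f) a0) := by rw [he'ι]
      _ = (cokernel.π f ≫ w') a0 := (Pseudoelement.comp_apply _ _ _).symm
      _ = (g ≫ cokernel.π (f ≫ g)) a0 := by rw [hπw]
      _ = (cokernel.π (f ≫ g)) (g a0) := Pseudoelement.comp_apply _ _ _
      _ = (cokernel.π (f ≫ g)) c0 := by rw [ha0]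
      _ = (kernel.ι q) x := hc0
  have hkq_tame : IsAlphaTame γ (kernel q) := isAlphaTame_kernel q tcfg tcg
  have hke_tame : IsAlphaTame γ (kernel e') := isAlphaTame_kernel e' tcf hkq_tame
  have hkq_mem : kernel q ∈ N.S a₂ :=
    (N.ses_small _ _ _ (kernel.ι e') e' (kernel.condition e') (shortExact_kernel e')
      ⟨γ, hγ, hke_tame⟩ ⟨γ, hγ, hkq_tame⟩ a₂ hca).2
  have hcfg_mem : cokernel (f ≫ g) ∈ N.S (a₂ + b₂) :=
    N.ses_add _ _ _ (kernel.ι q) q (kernel.condition q) (shortExact_kernel q)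
      ⟨γ, hγ, tcfg⟩ a₂ b₂ hkq_mem hcb
  refine ⟨a₁ + b₁, a₂ + b₂, ?_, hkfg_mem, hcfg_mem⟩
  calc a₁ + b₁ + (a₂ + b₂) = (a₁ + a₂) + (b₁ + b₂) := by ring
    _ ≤ a + b := add_le_add ha hb

/-! ### ε-equivalences are stable under pullback -/

theorem isEpsEquiv_pullback_fst (N : NoiseSystem K r) {A B G : Qr r ⥤ ModuleCat K}
    (φ : A ⟶ G) (ψ : B ⟶ G) (hA : IsTame A) (hB : IsTame B) (hG : IsTame G) {μ : ℚ≥0}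
    (hψ : IsEpsEquiv N μ ψ) : IsEpsEquiv N μ (pullback.fst φ ψ) := by
  obtain ⟨γ, hγ, tA, tB, tG⟩ := exists_common3 hA hB hG
  obtain ⟨μ₁, μ₂, hμ, hk, hc⟩ := hψ
  have tP : IsAlphaTame γ (pullback φ ψ) := isAlphaTame_pullback φ ψ tA tB tG
  -- kernel of fst is isomorphic to kernel of ψ
  have hk0 : (0 : kernel ψ ⟶ A) ≫ φ = kernel.ι ψ ≫ ψ := by
    rw [zero_comp, kernel.condition]
  set k : kernel ψ ⟶ pullback φ ψ := pullback.lift 0 (kernel.ι ψ) hk0 with hkdef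
  have hkfst : k ≫ pullback.fst φ ψ = 0 := pullback.lift_fst _ _ _
  have hksnd : k ≫ pullback.snd φ ψ = kernel.ι ψ := pullback.lift_snd _ _ _
  have hlim : IsLimit (KernelFork.ofι k hkfst) := by
    refine KernelFork.IsLimit.ofι _ _
      (fun {W'} t ht => kernel.lift ψ (t ≫ pullback.snd φ ψ) ?_)
      (fun {W'} t ht => ?_) (fun {W'} t ht l hl => ?_)
    · rw [Category.assoc, ← pullback.condition, ← Category.assoc, ht, zero_comp]
    · apply pullback.hom_ext
      · rw [Category.assoc, hkfst, comp_zero, ht]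
      · rw [Category.assoc, hksnd, kernel.lift_ι]
    · rw [← cancel_mono (kernel.ι ψ), kernel.lift_ι, ← hksnd, ← Category.assoc, hl]
  have kiso : kernel (pullback.fst φ ψ) ≅ kernel ψ :=
    IsLimit.conePointUniqueUpToIso (kernelIsKernel (pullback.fst φ ψ)) hlim
  have hk_mem : kernel (pullback.fst φ ψ) ∈ N.S μ₁ := mem_of_iso N kiso hk
  -- cokernel of fst injects into cokernel of ψ
  set c : cokernel (pullback.fst φ ψ) ⟶ cokernel ψ :=
    cokernel.map (pullback.fst φ ψ) ψ (pullback.snd φ ψ) φ pullback.condition with hcdef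
  have hπc : cokernel.π (pullback.fst φ ψ) ≫ c = φ ≫ cokernel.π ψ := cokernel.π_desc _ _ _
  haveI mono_c : Mono c := by
    apply mono_of_zero_of_map_zero
    intro x hx
    obtain ⟨a0, ha0⟩ := pseudo_surjective_of_epi (cokernel.π (pullback.fst φ ψ)) x
    have h1 : (cokernel.π ψ) (φ a0) = 0 := by
      calc (cokernel.π ψ) (φ a0) = (φ ≫ cokernel.π ψ) a0 := (Pseudoelement.comp_apply _ _ _).symm
        _ = (cokernel.π (pullback.fst φ ψ) ≫ c) a0 := by rw [hπc]
        _ = c ((cokernel.π (pullback.fst φ ψ)) a0) := Pseudoelement.comp_apply _ _ _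
        _ = c x := by rw [ha0]
        _ = 0 := hx
    obtain ⟨b0, hb0⟩ := pseudo_exact_of_exact (exact_coker ψ) _ h1
    obtain ⟨s, hs1, hs2⟩ := pseudo_pullback (f := φ) (g := ψ) hb0.symm
    rw [← ha0, ← hs1]
    calc (cokernel.π (pullback.fst φ ψ)) ((pullback.fst φ ψ) s)
        = (pullback.fst φ ψ ≫ cokernel.π (pullback.fst φ ψ)) s := (Pseudoelement.comp_apply _ _ _).symm
      _ = (0 : pullback φ ψ ⟶ cokernel (pullback.fst φ ψ)) s := by rw [cokernel.condition]
      _ = 0 := Pseudoelement.zero_apply _ _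
  have tcP : IsAlphaTame γ (cokernel (pullback.fst φ ψ)) := isAlphaTame_cokernel _ tP tA
  have tcψ : IsAlphaTame γ (cokernel ψ) := isAlphaTame_cokernel ψ tB tG
  have tcc : IsAlphaTame γ (cokernel c) := isAlphaTame_cokernel c tcP tcψ
  have hc_mem : cokernel (pullback.fst φ ψ) ∈ N.S μ₂ :=
    (N.ses_small _ _ _ c (cokernel.π c) (cokernel.condition c) (shortExact_cokernel c)
      ⟨γ, hγ, tcP⟩ ⟨γ, hγ, tcc⟩ μ₂ hc).1
  exact ⟨μ₁, μ₂, hμ, hk_mem, hc_mem⟩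

theorem isEpsEquiv_pullback_snd (N : NoiseSystem K r) {A B G : Qr r ⥤ ModuleCat K}
    (φ : A ⟶ G) (ψ : B ⟶ G) (hA : IsTame A) (hB : IsTame B) (hG : IsTame G) {μ : ℚ≥0}
    (hφ : IsEpsEquiv N μ φ) : IsEpsEquiv N μ (pullback.snd φ ψ) := by
  obtain ⟨γ, hγ, tA, tB, tG⟩ := exists_common3 hA hB hG
  obtain ⟨μ₁, μ₂, hμ, hk, hc⟩ := hφ
  have tP : IsAlphaTame γ (pullback φ ψ) := isAlphaTame_pullback φ ψ tA tB tG
  have hk0 : kernel.ι φ ≫ φ = (0 : kernel φ ⟶ B) ≫ ψ := by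
    rw [zero_comp, kernel.condition]
  set k : kernel φ ⟶ pullback φ ψ := pullback.lift (kernel.ι φ) 0 hk0 with hkdef
  have hkfst : k ≫ pullback.fst φ ψ = kernel.ι φ := pullback.lift_fst _ _ _
  have hksnd : k ≫ pullback.snd φ ψ = 0 := pullback.lift_snd _ _ _
  have hlim : IsLimit (KernelFork.ofι k hksnd) := by
    refine KernelFork.IsLimit.ofι _ _
      (fun {W'} t ht => kernel.lift φ (t ≫ pullback.fst φ ψ) ?_)
      (fun {W'} t ht => ?_) (fun {W'} t ht l hl => ?_)
    · rw [Category.assoc, pullback.condition, ← Category.assoc, ht, zero_comp]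
    · apply pullback.hom_ext
      · rw [Category.assoc, hkfst, kernel.lift_ι]
      · rw [Category.assoc, hksnd, comp_zero, ht]
    · rw [← cancel_mono (kernel.ι φ), kernel.lift_ι, ← hkfst, ← Category.assoc, hl]
  have kiso : kernel (pullback.snd φ ψ) ≅ kernel φ :=
    IsLimit.conePointUniqueUpToIso (kernelIsKernel (pullback.snd φ ψ)) hlim
  have hk_mem : kernel (pullback.snd φ ψ) ∈ N.S μ₁ := mem_of_iso N kiso hk
  set c : cokernel (pullback.snd φ ψ) ⟶ cokernel φ :=
    cokernel.map (pullback.snd φ ψ) φ (pullback.fst φ ψ) ψ pullback.condition.symm with hcdef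
  have hπc : cokernel.π (pullback.snd φ ψ) ≫ c = ψ ≫ cokernel.π φ := cokernel.π_desc _ _ _
  haveI mono_c : Mono c := by
    apply mono_of_zero_of_map_zero
    intro x hx
    obtain ⟨b0, hb0⟩ := pseudo_surjective_of_epi (cokernel.π (pullback.snd φ ψ)) x
    have h1 : (cokernel.π φ) (ψ b0) = 0 := by
      calc (cokernel.π φ) (ψ b0) = (ψ ≫ cokernel.π φ) b0 := (Pseudoelement.comp_apply _ _ _).symm
        _ = (cokernel.π (pullback.snd φ ψ) ≫ c) b0 := by rw [hπc]
        _ = c ((cokernel.π (pullback.snd φ ψ)) b0) := Pseudoelement.comp_apply _ _ _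
        _ = c x := by rw [hb0]
        _ = 0 := hx
    obtain ⟨a0, ha0⟩ := pseudo_exact_of_exact (exact_coker φ) _ h1
    obtain ⟨s, hs1, hs2⟩ := pseudo_pullback (f := φ) (g := ψ) ha0
    rw [← hb0, ← hs2]
    calc (cokernel.π (pullback.snd φ ψ)) ((pullback.snd φ ψ) s)
        = (pullback.snd φ ψ ≫ cokernel.π (pullback.snd φ ψ)) s := (Pseudoelement.comp_apply _ _ _).symm
      _ = (0 : pullback φ ψ ⟶ cokernel (pullback.snd φ ψ)) s := by rw [cokernel.condition]
      _ = 0 := Pseudoelement.zero_apply _ _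
  have tcP : IsAlphaTame γ (cokernel (pullback.snd φ ψ)) := isAlphaTame_cokernel _ tP tB
  have tcφ : IsAlphaTame γ (cokernel φ) := isAlphaTame_cokernel φ tA tG
  have tcc : IsAlphaTame γ (cokernel c) := isAlphaTame_cokernel c tcP tcφ
  have hc_mem : cokernel (pullback.snd φ ψ) ∈ N.S μ₂ :=
    (N.ses_small _ _ _ c (cokernel.π c) (cokernel.condition c) (shortExact_cokernel c)
      ⟨γ, hγ, tcP⟩ ⟨γ, hγ, tcc⟩ μ₂ hc).1
  exact ⟨μ₁, μ₂, hμ, hk_mem, hc_mem⟩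

/-! ### Closeness lemmas -/

theorem isEpsEquiv_id (N : NoiseSystem K r) (F : Qr r ⥤ ModuleCat K) :
    IsEpsEquiv N 0 (𝟙 F) := by
  refine ⟨0, 0, by simp, ?_, ?_⟩
  · exact N.zero_mem _ _ (IsZero.of_iso (isZero_zero _) (kernel.ofMono (𝟙 F)))
  · exact N.zero_mem _ _ (IsZero.of_iso (isZero_zero _) (cokernel.ofEpi (𝟙 F)))

theorem isEpsClose_self (N : NoiseSystem K r) {F : Qr r ⥤ ModuleCat K} (hF : IsTame F) :
    IsEpsClose N 0 F F :=
  ⟨F, hF, 𝟙 F, 𝟙 F, 0, 0, by simp, isEpsEquiv_id N F, isEpsEquiv_id N F⟩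

theorem isEpsClose_symm (N : NoiseSystem K r) {F G : Qr r ⥤ ModuleCat K} {ε : ℚ≥0}
    (h : IsEpsClose N ε F G) : IsEpsClose N ε G F := by
  obtain ⟨H, hH, φ, ψ, τ, μ, hτμ, hφ, hψ⟩ := h
  exact ⟨H, hH, ψ, φ, μ, τ, by rwa [add_comm], hψ, hφ⟩

theorem isEpsClose_trans (N : NoiseSystem K r) {F G H : Qr r ⥤ ModuleCat K}
    (hF : IsTame F) (hG : IsTame G) (hH : IsTame H) {ε δ : ℚ≥0}
    (h1 : IsEpsClose N ε F G) (h2 : IsEpsClose N δ G H) : IsEpsClose N (ε + δ) F H := by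
  obtain ⟨A, hAt, φ, ψ, τ, μ, hτμ, hφ, hψ⟩ := h1
  obtain ⟨B, hBt, φ', ψ', τ', μ', hτμ', hφ', hψ'⟩ := h2
  obtain ⟨γ, hγ, tA, tB, tG⟩ := exists_common3 hAt hBt hG
  have tP : IsTame (pullback ψ φ') := ⟨γ, hγ, isAlphaTame_pullback ψ φ' tA tB tG⟩
  have e1 : IsEpsEquiv N τ' (pullback.fst ψ φ') :=
    isEpsEquiv_pullback_fst N ψ φ' hAt hBt hG hφ'
  have e2 : IsEpsEquiv N μ (pullback.snd ψ φ') :=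
    isEpsEquiv_pullback_snd N ψ φ' hAt hBt hG hψ
  have c1 : IsEpsEquiv N (τ' + τ) (pullback.fst ψ φ' ≫ φ) :=
    isEpsEquiv_comp N _ _ tP hAt hF e1 hφ
  have c2 : IsEpsEquiv N (μ + μ') (pullback.snd ψ φ' ≫ ψ') :=
    isEpsEquiv_comp N _ _ tP hBt hH e2 hψ'
  refine ⟨pullback ψ φ', tP, _, _, τ' + τ, μ + μ', ?_, c1, c2⟩
  calc τ' + τ + (μ + μ') = (τ + μ) + (τ' + μ') := by ring
    _ ≤ ε + δ := add_le_add hτμ hτμ'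

end AuxNoiseProof

/-- `noiseDist` is an extended pseudometric on tame functors: reflexive, symmetric and
satisfying the triangle inequality. -/
theorem noiseDist_pseudometric {K : Type} [Field K] {r : ℕ} (N : NoiseSystem K r)
    (F G H : Qr r ⥤ ModuleCat K) (hF : IsTame F) (hG : IsTame G) (hH : IsTame H) :
    noiseDist N F F = 0 ∧
    noiseDist N F G = noiseDist N G F ∧
    noiseDist N F H ≤ noiseDist N F G + noiseDist N G H := by
  have hunf : ∀ X Y : Qr r ⥤ ModuleCat K, noiseDist N X Y =
      ⨅ (ε : ℚ≥0) (_ : IsEpsClose N ε X Y), ((ε : ℝ≥0) : ℝ≥0∞) := fun _ _ => rfl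
  constructor
  · refine le_antisymm ?_ zero_le
    rw [hunf]
    refine le_trans (iInf_le_of_le 0 (iInf_le_of_le (isEpsClose_self N hF) le_rfl)) ?_
    simp
  constructor
  · rw [hunf, hunf]
    apply le_antisymm
    · exact le_iInf₂ fun ε hε => iInf₂_le ε (isEpsClose_symm N hε)
    · exact le_iInf₂ fun ε hε => iInf₂_le ε (isEpsClose_symm N hε)
  · have key : ∀ (ε δ : ℚ≥0), IsEpsClose N ε F G → IsEpsClose N δ G H →
        noiseDist N F H ≤ ((ε : ℝ≥0) : ℝ≥0∞) + ((δ : ℝ≥0) : ℝ≥0∞) := by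
      intro ε δ h1 h2
      have hclose := isEpsClose_trans N hF hG hH h1 h2
      have h1' : noiseDist N F H ≤ (((ε + δ : ℚ≥0) : ℝ≥0) : ℝ≥0∞) := by
        rw [hunf]
        exact iInf_le_of_le (ε + δ) (iInf_le_of_le hclose le_rfl)
      refine le_trans h1' ?_
      rw [show (((ε + δ : ℚ≥0) : ℝ≥0) : ℝ≥0∞) = ((ε : ℝ≥0) : ℝ≥0∞) + ((δ : ℝ≥0) : ℝ≥0∞) by
        push_cast; rfl]
    rw [hunf F G, hunf G H]
    simp only [ENNReal.iInf_add, ENNReal.add_iInf]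
    refine le_iInf fun x => le_iInf fun hx => le_iInf fun y => le_iInf fun hy => ?_
    first
    | exact key x y hx hy
    | exact key y x hy hx
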